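/- The inference rules −→I, −→E₀, −→E₁, +←I, +←E₀, and +←E₁ are derivable in the fragment of BiND⇐_prop whose primitive rules are Non-contradiction, Reductio, +→I, +→E, −←I, and −←E: e.g., from +A₀ and −A₁ one can derive −(A₀→A₁) using only those primitives, and from −(A₀→A₁) one can derive +A₀ and also −A₁. -/
import Mathlib


set_option autoImplicit true
set_option relaxedAutoImplicit true

/-- Negation-free formulae with →, ← (but-not), ∧, ∨. -/
inductive Fm : Type
  | pv : ℕ → Fm
  | imp : Fm → Fm → Fm
  | bnot : Fm → Fm → Fm
  | and : Fm → Fm → Fm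
  | or : Fm → Fm → Fm
deriving DecidableEq

/-- Signed formulae: +A (acceptance) and −A (rejection). -/
inductive SF : Type
  | pl : Fm → SF
  | mi : Fm → SF
deriving DecidableEq

/-- Conjugation swaps polarities. -/
def SF.star : SF → SF
  | .pl A => .mi A
  | .mi A => .pl A

mutual
/-- The fragment of BiND⇐_prop whose primitive rules are Non-contradiction,
Reductio, +→I, +→E, −←I, and −←E. -/
inductive Drv : Set SF → SF → Prop
  | hyp {Γ a} : a ∈ Γ → Drv Γ a
  | reductio {Γ} (a : SF) : Absurd (insert a Γ) → Drv Γ a.star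
  | impIp {Γ A0 A1} : Drv (insert (.pl A0) Γ) (.pl A1) → Drv Γ (.pl (.imp A0 A1))
  | impEp {Γ A0 A1} : Drv Γ (.pl (.imp A0 A1)) → Drv Γ (.pl A0) → Drv Γ (.pl A1)
  | bnotIm {Γ A0 A1} : Drv (insert (.mi A1) Γ) (.mi A0) → Drv Γ (.mi (.bnot A0 A1))
  | bnotEm {Γ A0 A1} : Drv Γ (.mi (.bnot A0 A1)) → Drv Γ (.mi A1) → Drv Γ (.mi A0)

/-- `Absurd Γ` : ⊥ is derivable from Γ, via Non-contradiction. -/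
inductive Absurd : Set SF → Prop
  | nc {Γ a} : Drv Γ a → Drv Γ a.star → Absurd Γ
end

theorem SF.star_star (a : SF) : a.star.star = a := by cases a <;> rfl

theorem Drv.weak {Γ a} (h : Drv Γ a) : ∀ {Δ : Set SF}, Γ ⊆ Δ → Drv Δ a := by
  induction h using Drv.rec
    (motive_2 := fun Γ _ => ∀ {Δ : Set SF}, Γ ⊆ Δ → Absurd Δ) with
  | hyp ha => exact fun hs => Drv.hyp (hs ha)
  | reductio a _ ih => exact fun hs => Drv.reductio a (ih (Set.insert_subset_insert hs))
  | impIp _ ih => exact fun hs => Drv.impIp (ih (Set.insert_subset_insert hs))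
  | impEp _ _ ih1 ih2 => exact fun hs => Drv.impEp (ih1 hs) (ih2 hs)
  | bnotIm _ ih => exact fun hs => Drv.bnotIm (ih (Set.insert_subset_insert hs))
  | bnotEm _ _ ih1 ih2 => exact fun hs => Drv.bnotEm (ih1 hs) (ih2 hs)
  | nc _ _ ih1 ih2 => exact Absurd.nc (ih1 (by assumption)) (ih2 (by assumption))

theorem Absurd.weak {Γ Δ : Set SF} (h : Absurd Γ) (hs : Γ ⊆ Δ) : Absurd Δ := by
  cases h with
  | nc h1 h2 => exact Absurd.nc (h1.weak hs) (h2.weak hs)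

theorem Drv.self {Γ a} : Drv (insert a Γ) a := Drv.hyp (Set.mem_insert _ _)

theorem Drv.wk1 {Γ a b} (h : Drv Γ a) : Drv (insert b Γ) a :=
  h.weak (Set.subset_insert _ _)

theorem Absurd.any {Γ} (h : Absurd Γ) (b : SF) : Drv Γ b := by
  have := Drv.reductio b.star (h.weak (Set.subset_insert _ _))
  rwa [SF.star_star] at this

/-- Proposition 4(2): the rules −→I, −→E₀, −→E₁, +←I, +←E₀, +←E₁ are derivable
(admissible) in the fragment with primitives Non-contradiction, Reductio,
+→I, +→E, −←I, −←E. -/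
theorem minus_imp_plus_bnot_rules_derivable :
    (∀ (Γ : Set SF) (A0 A1 : Fm),
      Drv Γ (.pl A0) → Drv Γ (.mi A1) → Drv Γ (.mi (.imp A0 A1))) ∧
    (∀ (Γ : Set SF) (A0 A1 : Fm), Drv Γ (.mi (.imp A0 A1)) → Drv Γ (.pl A0)) ∧
    (∀ (Γ : Set SF) (A0 A1 : Fm), Drv Γ (.mi (.imp A0 A1)) → Drv Γ (.mi A1)) ∧
    (∀ (Γ : Set SF) (A0 A1 : Fm),
      Drv Γ (.pl A0) → Drv Γ (.mi A1) → Drv Γ (.pl (.bnot A0 A1))) ∧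
    (∀ (Γ : Set SF) (A0 A1 : Fm), Drv Γ (.pl (.bnot A0 A1)) → Drv Γ (.pl A0)) ∧
    (∀ (Γ : Set SF) (A0 A1 : Fm), Drv Γ (.pl (.bnot A0 A1)) → Drv Γ (.mi A1)) := by
  refine ⟨?_, ?_, ?_, ?_, ?_, ?_⟩
  · intro Γ A0 A1 h0 h1
    exact Drv.reductio (.pl (.imp A0 A1))
      (Absurd.nc (Drv.impEp Drv.self h0.wk1) h1.wk1)
  · intro Γ A0 A1 h
    exact Drv.reductio (.mi A0)
      (Absurd.nc (Drv.impIp ((Absurd.nc Drv.self Drv.self.wk1).any _)) h.wk1)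
  · intro Γ A0 A1 h
    exact Drv.reductio (.pl A1)
      (Absurd.nc (Drv.impIp Drv.self.wk1) h.wk1)
  · intro Γ A0 A1 h0 h1
    exact Drv.reductio (.mi (.bnot A0 A1))
      (Absurd.nc (Drv.bnotEm Drv.self h1.wk1) h0.wk1)
  · intro Γ A0 A1 h
    exact Drv.reductio (.mi A0)
      (Absurd.nc h.wk1 (Drv.bnotIm Drv.self.wk1))
  · intro Γ A0 A1 h
    exact Drv.reductio (.pl A1)
      (Absurd.nc h.wk1
        (Drv.bnotIm ((Absurd.nc Drv.self Drv.self.wk1).any _)))
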